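/- Let (a_i)_{i≥1}, (b_i)_{i≥0}, (λ_i)_{i≥1}, (c_i)_{i≥1} be sequences of complex numbers such that (a_i), (b_i), (λ_i) are bounded and there exists ε > 0 with |c_m| ≤ 1/4 − ε for all m ≥ 1. Then for all n, r, s ≥ 0 the family (wt(p))_{p∈Γ_{n,r,s}} is summable in ℂ (i.e., the sum Σ_{p∈Γ_{n,r,s}} wt(p) converges absolutely). -/

import Mathlib

open Polynomial

/-- Steps of an `R_II` path: up, horizontal, down, vertical-down, backward-down. -/
inductive RStep : Type
  | U | H | D | V | B
  deriving DecidableEq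

/-- Displacement of each step. -/
def RStep.disp : RStep → ℤ × ℤ
  | .U => (1, 1)
  | .H => (1, 0)
  | .D => (1, -1)
  | .V => (0, -1)
  | .B => (-1, -1)

/-- End point of a lattice path starting at `start` with the given list of steps. -/
def endPt (start : ℤ × ℤ) : List RStep → ℤ × ℤ
  | [] => start
  | s :: l => endPt (start + s.disp) l

/-- All intermediate heights along the path (starting at height `h`) are nonnegative,
so that the points of the path lie in `ℤ × ℤ≥0`. -/
def heightsNonneg (h : ℤ) : List RStep → Prop
  | [] => True
  | s :: l => 0 ≤ h + s.disp.2 ∧ heightsNonneg (h + s.disp.2) l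

/-- `Gamma n r s` is the set of `R_II` paths from `(0, r)` to `(n, s)`. -/
def Gamma (n r s : ℕ) : Set (List RStep) :=
  {l | heightsNonneg (r : ℤ) l ∧ endPt (0, (r : ℤ)) l = ((n : ℤ), (s : ℤ))}

/-- The list of all points visited by a path. -/
def pathPoints (start : ℤ × ℤ) : List RStep → List (ℤ × ℤ)
  | [] => [start]
  | s :: l => start :: pathPoints (start + s.disp) l

/-- `RGamma n r s` is the set of restricted `R_II` paths from `(0, r)` to `(n, s)`:
paths in `Gamma n r s` whose points have first coordinate `n` only at the final point. -/
def RGamma (n r s : ℕ) : Set (List RStep) :=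
  {l | l ∈ Gamma n r s ∧ ∀ p ∈ (pathPoints (0, (r : ℤ)) l).dropLast, p.1 ≠ (n : ℤ)}

/-- Weight of a single step starting at height `h`:
`1` for `U`, `b_i` for `H`, `λ_i` for `D`, `a_i` for `V`, `c_i` for `B` starting at height `i`. -/
def stepWt {R : Type*} [CommRing R] (a b lam c : ℕ → R) (h : ℤ) : RStep → R
  | .U => 1
  | .H => b h.toNat
  | .D => lam h.toNat
  | .V => a h.toNat
  | .B => c h.toNat

/-- Weight of a path starting at height `h`: the product of the weights of its steps. -/
def pathWt {R : Type*} [CommRing R] (a b lam c : ℕ → R) : ℤ → List RStep → R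
  | _, [] => 1
  | h, s :: l => stepWt a b lam c h s * pathWt a b lam c (h + s.disp.2) l

/-! ### Auxiliary material for the proof -/

instance : Fintype RStep :=
  ⟨⟨([RStep.U, RStep.H, RStep.D, RStep.V, RStep.B] : List RStep), by decide⟩,
    fun x => by cases x <;> decide⟩

namespace Stmt13Aux

lemma RStep.sum_eq (f : RStep → ℝ) :
    ∑ st : RStep, f st = f .U + f .H + f .D + f .V + f .B := by
  show f .U + (f .H + (f .D + (f .V + (f .B + 0)))) = _
  ring

lemma endPt_eq (l : List RStep) : ∀ start, endPt start l = start + (l.map RStep.disp).sum := by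
  induction l with
  | nil => intro start; simp [endPt]
  | cons s l ih => intro start; rw [endPt, ih]; simp [add_assoc]

/-- Step bounds: `1` for `U`, `M` for `H, D, V`, `q` for `B`. -/
noncomputable def bnd (M q : ℝ) : RStep → ℝ
  | .U => 1
  | .H => M
  | .D => M
  | .V => M
  | .B => q

/-- The tilting factor `x^{dx} y^{dy}` with `x = 1/(2y)`. -/
noncomputable def w (y : ℝ) : RStep → ℝ :=
  fun st => (1 / (2 * y)) ^ st.disp.1 * y ^ st.disp.2

/-- The tilted step bounds. -/
noncomputable def mu (M q y : ℝ) : RStep → ℝ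
  | .U => 1 / 2
  | .H => M / (2 * y)
  | .D => M / (2 * y ^ 2)
  | .V => M / y
  | .B => 2 * q

lemma mu_eq (M q y : ℝ) (hy : 0 < y) (st : RStep) : mu M q y st = bnd M q st * w y st := by
  have hy' : y ≠ 0 := ne_of_gt hy
  have h2y : 2 * y ≠ 0 := by positivity
  cases st <;>
    simp only [mu, bnd, w, RStep.disp, zpow_one, zpow_zero, zpow_neg, one_mul, mul_one] <;>
    field_simp <;> first | ring1 | (left; ring1)

lemma prod_w (y : ℝ) (hy : 0 < y) (l : List RStep) :
    (l.map (w y)).prod =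
      (1 / (2 * y)) ^ ((l.map RStep.disp).sum.1) * y ^ ((l.map RStep.disp).sum.2) := by
  have h2 : (1 / (2 * y)) ≠ 0 := by positivity
  have hy' : y ≠ 0 := ne_of_gt hy
  induction l with
  | nil => simp
  | cons s l ih =>
      simp only [List.map_cons, List.prod_cons, List.sum_cons, Prod.fst_add, Prod.snd_add,
        zpow_add₀ h2, zpow_add₀ hy', ih, w]
      ring

lemma bnd_nonneg {M q : ℝ} (hM : 0 ≤ M) (hq : 0 ≤ q) (st : RStep) : 0 ≤ bnd M q st := by
  cases st <;> simp [bnd] <;> assumption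

lemma norm_pathWt_le (a b lam c : ℕ → ℂ) (M q : ℝ) (hM1 : 1 ≤ M)
    (ha : ∀ i, ‖a i‖ ≤ M) (hb : ∀ i, ‖b i‖ ≤ M)
    (hl : ∀ i, ‖lam i‖ ≤ M)
    (hq : 0 ≤ q) (hc : ∀ m, 1 ≤ m → ‖c m‖ ≤ q) :
    ∀ (l : List RStep) (h0 : ℤ), heightsNonneg h0 l →
      ‖pathWt a b lam c h0 l‖ ≤ (l.map (bnd M q)).prod := by
  intro l
  induction l with
  | nil => intro h0 _; simp [pathWt]
  | cons s l ih =>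
    intro h0 hh
    obtain ⟨h1, h2⟩ := hh
    have hrest := ih (h0 + s.disp.2) h2
    have hstep : ‖stepWt a b lam c h0 s‖ ≤ bnd M q s := by
      cases s with
      | U => simp [stepWt, bnd]
      | H => simpa [stepWt, bnd] using hb h0.toNat
      | D => simpa [stepWt, bnd] using hl h0.toNat
      | V => simpa [stepWt, bnd] using ha h0.toNat
      | B =>
        have h1' : (1 : ℤ) ≤ h0 := by
          have := h1; simp [RStep.disp] at this; omega
        have : 1 ≤ h0.toNat := by omega
        simpa [stepWt, bnd] using hc h0.toNat this
    have : ‖pathWt a b lam c h0 (s :: l)‖ =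
        ‖stepWt a b lam c h0 s‖ *
          ‖pathWt a b lam c (h0 + s.disp.2) l‖ := by
      rw [pathWt, norm_mul]
    rw [this, List.map_cons, List.prod_cons]
    exact mul_le_mul hstep hrest (norm_nonneg _)
      (bnd_nonneg (le_trans zero_le_one hM1) hq s)

lemma sum_pow (μ : RStep → ℝ) (L : ℕ) :
    ∑ g : Fin L → RStep, ∏ i, μ (g i) = (∑ st, μ st) ^ L := by
  classical
  rw [← Fintype.prod_sum (fun (_ : Fin L) (st : RStep) => μ st)]
  simp

lemma list_prod_eq (μ : RStep → ℝ) (l : List RStep) :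
    (l.map μ).prod = ∏ i, μ (l.get i) := by
  conv_lhs => rw [← List.ofFn_get l]
  rw [List.map_ofFn, List.prod_ofFn]
  rfl

lemma summable_muprod (μ : RStep → ℝ) (hμ : ∀ st, 0 ≤ μ st) (hS : ∑ st, μ st < 1) :
    Summable (fun l : List RStep => (l.map μ).prod) := by
  have hS0 : (0 : ℝ) ≤ ∑ st, μ st := Finset.sum_nonneg fun st _ => hμ st
  have key : Summable (fun p : Σ L : ℕ, Fin L → RStep => ∏ i, μ (p.2 i)) := by
    apply (summable_sigma_of_nonneg ?_).2
    · constructor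
      · intro L
        exact Summable.of_finite
      · have he : (fun L : ℕ => ∑' g : Fin L → RStep, ∏ i, μ (g i)) =
            fun L : ℕ => (∑ st, μ st) ^ L := by
          funext L; rw [tsum_fintype, sum_pow]
        rw [he]
        exact summable_geometric_of_lt_one hS0 hS
    · intro p; exact Finset.prod_nonneg fun i _ => hμ _
  have h2 := (Equiv.summable_iff (List.equivSigmaTuple (α := RStep))
    (f := fun p : Σ L : ℕ, Fin L → RStep => ∏ i, μ (p.2 i))).2 key
  have h3 : (fun l : List RStep => (l.map μ).prod) =
      (fun p : Σ L : ℕ, Fin L → RStep => ∏ i, μ (p.2 i)) ∘ List.equivSigmaTuple := by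
    funext l
    simp only [Function.comp, List.equivSigmaTuple]
    exact list_prod_eq μ l
  rw [h3]
  exact h2

end Stmt13Aux

/-- If `(a_i), (b_i), (λ_i)` are bounded complex sequences and `|c_m| ≤ 1/4 − ε` for all
`m ≥ 1` for some fixed `ε > 0`, then for all `n, r, s ≥ 0` the family
`(wt(p))_{p∈Γ_{n,r,s}}` is summable in ℂ. -/
theorem stmt13 (a b lam c : ℕ → ℂ)
    (hab : ∃ M : ℝ, ∀ i : ℕ, ‖a i‖ ≤ M)
    (hbb : ∃ M : ℝ, ∀ i : ℕ, ‖b i‖ ≤ M)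
    (hlb : ∃ M : ℝ, ∀ i : ℕ, ‖lam i‖ ≤ M)
    (ε : ℝ) (hε : 0 < ε) (hc : ∀ m : ℕ, 1 ≤ m → ‖c m‖ ≤ 1 / 4 - ε)
    (n r s : ℕ) :
    Summable fun p : Gamma n r s => pathWt a b lam c (r : ℤ) p.1 := by
  classical
  open Stmt13Aux in
  obtain ⟨Ma, ha⟩ := hab
  obtain ⟨Mb, hb⟩ := hbb
  obtain ⟨Ml, hl⟩ := hlb
  set q : ℝ := 1 / 4 - ε with hq_def
  have hq0 : 0 ≤ q := le_trans (norm_nonneg (c 1)) (hc 1 le_rfl)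
  set M : ℝ := max 1 (max Ma (max Mb Ml)) with hM_def
  have hM1 : 1 ≤ M := le_max_left _ _
  have hM0 : 0 < M := lt_of_lt_of_le one_pos hM1
  have ha' : ∀ i, ‖a i‖ ≤ M := fun i =>
    le_trans (ha i) (le_trans (le_max_left _ _) (le_max_right _ _))
  have hb' : ∀ i, ‖b i‖ ≤ M := fun i =>
    le_trans (hb i) (le_trans (le_trans (le_max_left _ _) (le_max_right _ _)) (le_max_right _ _))
  have hl' : ∀ i, ‖lam i‖ ≤ M := fun i =>
    le_trans (hl i) (le_trans (le_trans (le_max_right _ _) (le_max_right _ _)) (le_max_right _ _))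
  set y : ℝ := max 1 (2 * M / ε) with hy_def
  have hy1 : 1 ≤ y := le_max_left _ _
  have hy0 : 0 < y := lt_of_lt_of_le one_pos hy1
  have hyM : 2 * M / ε ≤ y := le_max_right _ _
  -- the tilted weights sum to less than 1
  set μ : RStep → ℝ := mu M q y with hμ_def
  have hμ0 : ∀ st, 0 ≤ μ st := by
    intro st
    cases st <;> simp [hμ_def, mu] <;> positivity
  have hMy : M / y ≤ ε / 2 := by
    rw [div_le_iff₀ hy0]
    have h1 : 2 * M ≤ y * ε := (div_le_iff₀ hε).1 hyM
    linarith
  have hMy2 : M / (2 * y) ≤ ε / 4 := by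
    have h1 : M / (2 * y) = (M / y) / 2 := by
      rw [div_div, mul_comm]
    rw [h1]; linarith
  have hMy3 : M / (2 * y ^ 2) ≤ ε / 4 := by
    have h1 : M / (2 * y ^ 2) ≤ M / (2 * y) := by
      gcongr
      nlinarith
    linarith
  have hS : ∑ st, μ st < 1 := by
    rw [RStep.sum_eq]
    have : μ .U + μ .H + μ .D + μ .V + μ .B =
        1 / 2 + M / (2 * y) + M / (2 * y ^ 2) + M / y + 2 * q := by
      simp [hμ_def, mu]
    rw [this, hq_def]
    linarith
  -- summable majorant
  set K : ℝ := (2 * y) ^ (n : ℤ) * y ^ ((r : ℤ) - (s : ℤ)) with hK_def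
  have hmaj : Summable (fun p : Gamma n r s => K * (p.1.map μ).prod) := by
    have h1 : Summable (fun l : List RStep => (l.map μ).prod) :=
      summable_muprod μ hμ0 hS
    have h2 := (h1.subtype (Gamma n r s)).mul_left K
    exact h2
  -- pointwise bound
  have hbound : ∀ p : Gamma n r s,
      ‖pathWt a b lam c (r : ℤ) p.1‖ ≤ K * (p.1.map μ).prod := by
    rintro ⟨l, hmem⟩
    obtain ⟨hhn, hend⟩ := hmem
    have hsum_disp : (l.map RStep.disp).sum = ((n : ℤ), (s : ℤ) - (r : ℤ)) := by
      have := endPt_eq l (0, (r : ℤ))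
      rw [hend] at this
      have h1 := congrArg Prod.fst this
      have h2 := congrArg Prod.snd this
      simp at h1 h2
      exact Prod.ext h1.symm (by omega)
    -- relate the two products
    have hprod : K * (l.map μ).prod = (l.map (bnd M q)).prod := by
      have hmap : l.map μ = l.map (fun st => bnd M q st * w y st) := by
        apply List.map_congr_left
        intro st _
        exact mu_eq M q y hy0 st
      have h2y : (2 * y) ≠ 0 := by positivity
      have hy' : y ≠ 0 := ne_of_gt hy0
      rw [hmap, List.prod_map_mul, prod_w y hy0, hsum_disp]
      have e1 : ((1 : ℝ) / (2 * y)) ^ (n : ℤ) = ((2 * y) ^ (n : ℤ))⁻¹ := by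
        rw [one_div, inv_zpow]
      rw [e1, hK_def]
      have e2 : ((2 * y) ^ (n : ℤ)) * ((2 * y) ^ (n : ℤ))⁻¹ = 1 :=
        mul_inv_cancel₀ (zpow_ne_zero _ h2y)
      have e3 : y ^ ((r : ℤ) - (s : ℤ)) * y ^ ((s : ℤ) - (r : ℤ)) = 1 := by
        rw [← zpow_add₀ hy']
        simp
      calc (2 * y) ^ (n : ℤ) * y ^ ((r : ℤ) - (s : ℤ)) *
            ((l.map (bnd M q)).prod * (((2 * y) ^ (n : ℤ))⁻¹ * y ^ ((s : ℤ) - (r : ℤ))))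
          = (l.map (bnd M q)).prod *
            (((2 * y) ^ (n : ℤ)) * ((2 * y) ^ (n : ℤ))⁻¹) *
            (y ^ ((r : ℤ) - (s : ℤ)) * y ^ ((s : ℤ) - (r : ℤ))) := by ring
        _ = (l.map (bnd M q)).prod := by rw [e2, e3, mul_one, mul_one]
    rw [hprod]
    exact norm_pathWt_le a b lam c M q hM1 ha' hb' hl' hq0 hc l (r : ℤ) hhn
  exact Summable.of_norm
    (hmaj.of_nonneg_of_le (fun p => norm_nonneg _) hbound)
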